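/- One-step contraction implies final bound: if a nonnegative sequence r_τ satisfies r_{τ+1} ≤ (1 − η_τ μ) r_τ + η_τ² C for all τ, with μ, C > 0, η_τ ∈ [0, 1/μ] appropriately chosen (γ_τ ≤ 1/d with d = 1 ≥ μ), then for all T ≥ 1 there exists a choice of step sizes such that r_{T+1} ≤ 32 r_0 exp(−μT/2) + 36C/(μ² T). -/

import Mathlib

set_option maxHeartbeats 1000000


/-- one-step contraction implies final bound (Stich's lemma with
s = 0, a = μ, c = C, d = 1). -/
theorem contraction_implies_final_bound
    (r : ℕ → ℝ) (hr : ∀ τ, 0 ≤ r τ)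
    (μ C : ℝ) (hμ0 : 0 < μ) (hμ1 : μ ≤ 1) (hC : 0 < C) :
    ∀ T : ℕ, 1 ≤ T →
      ∃ η : ℕ → ℝ, (∀ τ, 0 ≤ η τ ∧ η τ ≤ 1) ∧
        ((∀ τ, r (τ + 1) ≤ (1 - η τ * μ) * r τ + (η τ) ^ 2 * C) →
          r (T + 1) ≤ 32 * r 0 * Real.exp (-(μ * T) / 2) + 36 * C / (μ ^ 2 * T)) := by
  intro T hT
  set t0 : ℕ := (T + 1) / 2 with ht0def
  refine ⟨fun τ => if τ < t0 then 1 else 2 / (2 + μ * ((τ - t0 : ℕ) : ℝ)), ?_, ?_⟩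
  · intro τ
    by_cases h : τ < t0
    · simp [h]
    · have hk : (0:ℝ) ≤ ((τ - t0 : ℕ) : ℝ) := Nat.cast_nonneg _
      have hd : (2:ℝ) ≤ 2 + μ * ((τ - t0 : ℕ) : ℝ) := by nlinarith
      simp only [h, if_false]
      constructor
      · positivity
      · rw [div_le_one (by linarith)]; linarith
  · intro hrec
    have h1μ : (0:ℝ) ≤ 1 - μ := by linarith
    -- Phase 1: constant step size 1
    have P1 : ∀ t, t ≤ t0 → r t ≤ (1 - μ) ^ t * r 0 + C / μ := by
      intro t
      induction t with
      | zero =>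
        intro _
        have : (0:ℝ) < C / μ := div_pos hC hμ0
        simp only [pow_zero, one_mul]
        linarith
      | succ n ih =>
        intro hn
        have hn' : n < t0 := Nat.lt_of_lt_of_le (Nat.lt_succ_self n) hn
        have h1 := hrec n
        simp only [hn', if_true] at h1
        have h2 := ih (le_of_lt hn')
        have hCe : (1 - μ) * (C / μ) + C = C / μ := by field_simp; ring
        calc r (n + 1) ≤ (1 - 1 * μ) * r n + 1 ^ 2 * C := h1
          _ = (1 - μ) * r n + C := by ring
          _ ≤ (1 - μ) * ((1 - μ) ^ n * r 0 + C / μ) + C :=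
              add_le_add_left (mul_le_mul_of_nonneg_left h2 h1μ) C
          _ = (1 - μ) ^ (n + 1) * r 0 + ((1 - μ) * (C / μ) + C) := by ring
          _ = (1 - μ) ^ (n + 1) * r 0 + C / μ := by rw [hCe]
    -- Phase 2 : decreasing step sizes
    have P2 : ∀ s : ℕ, (2 + μ * s - μ) ^ 2 * r (t0 + s) ≤ (2 - μ) ^ 2 * r t0 + 4 * C * s := by
      intro s
      induction s with
      | zero => simp
      | succ n ih =>
        have hnt : ¬ (t0 + n < t0) := by omega
        have h1 := hrec (t0 + n)
        simp only [hnt, if_false, Nat.add_sub_cancel_left] at h1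
        set D : ℝ := 2 + μ * (n : ℝ) with hDdef
        have hD2 : (2:ℝ) ≤ D := by
          have : (0:ℝ) ≤ (n:ℝ) := Nat.cast_nonneg n
          nlinarith
        have hD0 : (0:ℝ) < D := by linarith
        have e1 : D ^ 2 * ((1 - 2 / D * μ) * r (t0 + n) + (2 / D) ^ 2 * C)
            = (D ^ 2 - 2 * D * μ) * r (t0 + n) + 4 * C := by
          field_simp
          ring
        have step : D ^ 2 * r (t0 + n + 1) ≤ (D - μ) ^ 2 * r (t0 + n) + 4 * C := by
          have hm := mul_le_mul_of_nonneg_left h1 (by positivity : (0:ℝ) ≤ D ^ 2)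
          rw [e1] at hm
          nlinarith [hr (t0 + n), sq_nonneg μ]
        have hgoalc : (2 + μ * ((n:ℕ) + 1 : ℕ) - μ : ℝ) = D := by
          push_cast [hDdef]; ring
        have hihc : (2 + μ * (n : ℝ) - μ) = D - μ := by rw [hDdef]
        rw [hihc] at ih
        push_cast
        have hidx : t0 + (n + 1) = t0 + n + 1 := rfl
        have : (2 + μ * ((n:ℝ) + 1) - μ) = D := by rw [hDdef]; ring
        rw [this]
        calc D ^ 2 * r (t0 + (n + 1)) = D ^ 2 * r (t0 + n + 1) := by rw [hidx]
          _ ≤ (D - μ) ^ 2 * r (t0 + n) + 4 * C := step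
          _ ≤ (2 - μ) ^ 2 * r t0 + 4 * C * n + 4 * C := by linarith
          _ = (2 - μ) ^ 2 * r t0 + 4 * C * ((n:ℝ) + 1) := by ring
    -- assemble
    set S : ℕ := T + 1 - t0 with hSdef
    have ht0T : t0 ≤ T := by omega
    have hS1 : 1 ≤ S := by omega
    have hidx : t0 + S = T + 1 := by omega
    have ht01 : 1 ≤ t0 := by omega
    have hT2t0 : T ≤ 2 * t0 := by omega
    have hT2S : T ≤ 2 * S := by omega
    have H := P2 S
    rw [hidx] at H
    set W : ℝ := 2 + μ * (S : ℝ) - μ with hWdef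
    set E : ℝ := Real.exp ((t0 : ℝ) * (-μ)) with hEdef
    set E' : ℝ := Real.exp (-(μ * (T:ℝ)) / 2) with hE'def
    have hSR : (1:ℝ) ≤ (S:ℝ) := by exact_mod_cast hS1
    have hTR : (1:ℝ) ≤ (T:ℝ) := by exact_mod_cast hT
    have hT2SR : (T:ℝ) ≤ 2 * (S:ℝ) := by exact_mod_cast hT2S
    have hT2t0R : (T:ℝ) ≤ 2 * (t0:ℝ) := by exact_mod_cast hT2t0
    have hW2 : (2:ℝ) ≤ W := by nlinarith
    have hWμS : μ * (S:ℝ) ≤ W := by rw [hWdef]; linarith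
    have hμS0 : (0:ℝ) ≤ μ * (S:ℝ) := by positivity
    have h2μW : (2 - μ) ^ 2 ≤ W ^ 2 := by nlinarith
    have h2μ4 : (2 - μ) ^ 2 ≤ 4 := by nlinarith
    have hμTW : μ * (T:ℝ) ≤ W ^ 2 := by nlinarith
    -- r t0 bound with exponential
    have hrt0 : r t0 ≤ E * r 0 + C / μ := by
      have hp1 := P1 t0 le_rfl
      have hexp1 : (1 - μ) ≤ Real.exp (-μ) := by
        have := Real.add_one_le_exp (-μ)
        linarith
      have hexp2 : (1 - μ) ^ t0 ≤ Real.exp (-μ) ^ t0 := pow_le_pow_left₀ h1μ hexp1 t0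
      have hexp3 : Real.exp (-μ) ^ t0 = E := by
        rw [hEdef, Real.exp_nat_mul]
      have : (1 - μ) ^ t0 * r 0 ≤ E * r 0 := by
        rw [← hexp3]
        exact mul_le_mul_of_nonneg_right hexp2 (hr 0)
      linarith
    have hrt0' : μ * r t0 ≤ μ * (E * r 0) + C := by
      have hm := mul_le_mul_of_nonneg_left hrt0 hμ0.le
      have he : μ * (E * r 0 + C / μ) = μ * (E * r 0) + C := by field_simp
      linarith [he ▸ hm]
    have hEE' : E ≤ E' := by
      rw [hEdef, hE'def]
      apply Real.exp_le_exp.mpr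
      nlinarith
    have hE0 : (0:ℝ) ≤ E := Real.exp_nonneg _
    have hE'0 : (0:ℝ) ≤ E' := Real.exp_nonneg _
    -- big combination
    have hT0R : (0:ℝ) < (T:ℝ) := by linarith
    have B1 : μ^2 * T * (W^2 * r (T+1)) ≤ μ^2 * T * ((2-μ)^2 * r t0 + 4*C*S) :=
      mul_le_mul_of_nonneg_left H (by positivity)
    have B2 : μ * T * (2-μ)^2 * (μ * r t0) ≤ μ * T * (2-μ)^2 * (μ * (E * r 0) + C) :=
      mul_le_mul_of_nonneg_left hrt0' (by positivity)
    have B3 : μ^2 * T * (E * r 0) * ((2-μ)^2) ≤ μ^2 * T * (E * r 0) * (W^2) :=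
      mul_le_mul_of_nonneg_left h2μW
        (mul_nonneg (by positivity) (mul_nonneg hE0 (hr 0)))
    have B4 : μ * T * C * ((2-μ)^2) ≤ μ * T * C * 4 :=
      mul_le_mul_of_nonneg_left h2μ4 (by positivity)
    have B5 : 4 * C * (μ * T) ≤ 4 * C * W^2 :=
      mul_le_mul_of_nonneg_left hμTW (by positivity)
    have B6 : 4 * C * S * μ^2 * (T:ℝ) ≤ 4 * C * S * μ^2 * (2 * S) :=
      mul_le_mul_of_nonneg_left hT2SR (by positivity)
    have B7 : (μ * (S:ℝ)) * (μ * (S:ℝ)) ≤ W * W :=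
      mul_le_mul hWμS hWμS hμS0 (by linarith)
    have B7' : 8 * C * ((μ * (S:ℝ)) * (μ * (S:ℝ))) ≤ 8 * C * (W * W) :=
      mul_le_mul_of_nonneg_left B7 (by positivity)
    have B8 : μ^2 * T * W^2 * r 0 * E ≤ μ^2 * T * W^2 * r 0 * E' :=
      mul_le_mul_of_nonneg_left hEE' (mul_nonneg (by positivity) (hr 0))
    have key : μ^2 * T * W^2 * r (T+1) ≤ 32 * (μ^2 * T * W^2 * (E' * r 0)) + 36 * C * W^2 := by
      have posE : (0:ℝ) ≤ μ^2 * T * W^2 * (E' * r 0) :=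
        mul_nonneg (by positivity) (mul_nonneg hE'0 (hr 0))
      have posCW : (0:ℝ) ≤ C * W^2 := by positivity
      linarith [B1, B2, B3, B4, B5, B6, B7', B8, posE, posCW]
    have keyR : μ^2 * (T:ℝ) * W^2 * (32 * r 0 * E' + 36 * C / (μ^2 * T))
        = 32 * (μ^2 * T * W^2 * (E' * r 0)) + 36 * C * W^2 := by
      field_simp
    have hW0 : (0:ℝ) < W := by linarith
    have hposc : (0:ℝ) < μ^2 * (T:ℝ) * W^2 := by positivity
    have key' : μ^2 * (T:ℝ) * W^2 * r (T+1) ≤ μ^2 * (T:ℝ) * W^2 * (32 * r 0 * E' + 36 * C / (μ^2 * T)) := by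
      rw [keyR]; linarith
    exact le_of_mul_le_mul_left key' hposc
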